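/- arXiv:0708.4244 — 3 statements merged into one kernel-verified Lean document; each statement's English description precedes it below -/
import Mathlib

section
/- Let ε_1 = (1,1,1), ε_2 = (−1,1,−1), ε_3 = (1,−1,−1), ε_4 = (−1,−1,1) in {±1}³, and for i,j,k ∈ {1,2,3} define T_{ijk} : ℝ³ → ℝ by T_{ijk}(x) = Σ_{a=1}^{4} ε_a^{(i)} ε_a^{(j)} ε_a^{(k)} · (1/16) · tan( π/4 − (ε_a · x)/4 ) + (1/4)·tan(−x_i/2) if i = j = k (no tan(−x_i/2) term otherwise). Then for every x ∈ ℝ³ such that cos(π/4 − (ε_a·x)/4) ≠ 0 for a = 1,…,4 and cos(x_i/2) ≠ 0 for i = 1,2,3, one has T_{112}(x)² + T_{122}(x)² + T_{123}(x)² = T_{111}(x)·T_{122}(x) + T_{112}(x)·T_{222}(x) + T_{113}(x)·T_{223}(x) + 1/16. -/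
open Real

/-- The four sign vectors `ε_1, …, ε_4` appearing in the `ℤ/2 × ℤ/2`
generating function. -/
noncomputable def eps : Fin 4 → Fin 3 → ℝ :=
  ![![1, 1, 1], ![-1, 1, -1], ![1, -1, -1], ![-1, -1, 1]]

/-- The third partial derivatives `T_{ijk} = ∂³F/∂x_i∂x_j∂x_k` of the explicit
`ℤ/2 × ℤ/2` generating function. -/
noncomputable def T (i j k : Fin 3) (x : Fin 3 → ℝ) : ℝ :=
  (∑ a : Fin 4, eps a i * eps a j * eps a k * (1/16) *
      Real.tan (Real.pi / 4 - (∑ t : Fin 3, eps a t * x t) / 4))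
  + (if i = j ∧ j = k then (1/4) * Real.tan (-(x i) / 2) else 0)

lemma eps00 : eps 0 0 = 1 := rfl
lemma eps01 : eps 0 1 = 1 := rfl
lemma eps02 : eps 0 2 = 1 := rfl
lemma eps10 : eps 1 0 = -1 := rfl
lemma eps11 : eps 1 1 = 1 := rfl
lemma eps12 : eps 1 2 = -1 := rfl
lemma eps20 : eps 2 0 = 1 := rfl
lemma eps21 : eps 2 1 = -1 := rfl
lemma eps22 : eps 2 2 = -1 := rfl
lemma eps30 : eps 3 0 = -1 := rfl
lemma eps31 : eps 3 1 = -1 := rfl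
lemma eps32 : eps 3 2 = 1 := rfl

lemma key1 (u v w : ℝ) (hu : Real.cos u ≠ 0) (hv : Real.cos v ≠ 0)
    (hw : Real.cos w ≠ 0) (h : u + v + w = Real.pi / 2) :
    Real.tan w * (Real.tan u + Real.tan v) = 1 - Real.tan u * Real.tan v := by
  have hwv : w = Real.pi / 2 - (u + v) := by linarith
  subst hwv
  rw [Real.cos_pi_div_two_sub] at hw
  rw [Real.tan_eq_sin_div_cos, Real.tan_eq_sin_div_cos u, Real.tan_eq_sin_div_cos v,
    Real.sin_pi_div_two_sub, Real.cos_pi_div_two_sub]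
  field_simp
  rw [Real.sin_add, Real.cos_add]
  ring

lemma key2 (u v w : ℝ) (hu : Real.cos u ≠ 0) (hv : Real.cos v ≠ 0)
    (hw : Real.cos w ≠ 0) (h : u + v - w = Real.pi / 2) :
    Real.tan w * (Real.tan u + Real.tan v) = Real.tan u * Real.tan v - 1 := by
  have h' := key1 u v (-w) hu hv (by rwa [Real.cos_neg]) (by linarith)
  rw [Real.tan_neg] at h'
  linarith

theorem klein_four_WDVV_first (x : Fin 3 → ℝ)
    (hcos : ∀ a : Fin 4, Real.cos (Real.pi / 4 - (∑ t : Fin 3, eps a t * x t) / 4) ≠ 0)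
    (hcos' : ∀ i : Fin 3, Real.cos (x i / 2) ≠ 0) :
    T 0 0 1 x ^ 2 + T 0 1 1 x ^ 2 + T 0 1 2 x ^ 2
      = T 0 0 0 x * T 0 1 1 x + T 0 0 1 x * T 1 1 1 x + T 0 0 2 x * T 1 1 2 x + 1/16 := by
  have h0 := hcos 0
  have h1 := hcos 1
  have h2 := hcos 2
  have h3 := hcos 3
  have hp := hcos' 0
  have hq := hcos' 1
  simp only [Fin.sum_univ_three, eps00, eps01, eps02, eps10, eps11, eps12, eps20, eps21,
    eps22, eps30, eps31, eps32] at h0 h1 h2 h3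
  norm_num at h0 h1 h2 h3
  have R1 : Real.tan (x 1 / 2) *
        (Real.tan (Real.pi / 4 - (x 0 + x 1 + x 2) / 4)
          + Real.tan (Real.pi / 4 - (-x 0 + x 1 + -x 2) / 4))
      = 1 - Real.tan (Real.pi / 4 - (x 0 + x 1 + x 2) / 4)
          * Real.tan (Real.pi / 4 - (-x 0 + x 1 + -x 2) / 4) :=
    key1 _ _ _ h0 h1 hq (by ring)
  have R2 : Real.tan (x 0 / 2) *
        (Real.tan (Real.pi / 4 - (x 0 + x 1 + x 2) / 4)
          + Real.tan (Real.pi / 4 - (x 0 + -x 1 + -x 2) / 4))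
      = 1 - Real.tan (Real.pi / 4 - (x 0 + x 1 + x 2) / 4)
          * Real.tan (Real.pi / 4 - (x 0 + -x 1 + -x 2) / 4) :=
    key1 _ _ _ h0 h2 hp (by ring)
  have R3 : Real.tan (x 0 / 2) *
        (Real.tan (Real.pi / 4 - (-x 0 + x 1 + -x 2) / 4)
          + Real.tan (Real.pi / 4 - (-x 0 + -x 1 + x 2) / 4))
      = Real.tan (Real.pi / 4 - (-x 0 + x 1 + -x 2) / 4)
          * Real.tan (Real.pi / 4 - (-x 0 + -x 1 + x 2) / 4) - 1 :=
    key2 _ _ _ h1 h3 hp (by ring)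
  have R4 : Real.tan (x 1 / 2) *
        (Real.tan (Real.pi / 4 - (x 0 + -x 1 + -x 2) / 4)
          + Real.tan (Real.pi / 4 - (-x 0 + -x 1 + x 2) / 4))
      = Real.tan (Real.pi / 4 - (x 0 + -x 1 + -x 2) / 4)
          * Real.tan (Real.pi / 4 - (-x 0 + -x 1 + x 2) / 4) - 1 :=
    key2 _ _ _ h2 h3 hq (by ring)
  have hneg0 : Real.tan (-x 0 / 2) = -Real.tan (x 0 / 2) := by
    rw [neg_div, Real.tan_neg]
  have hneg1 : Real.tan (-x 1 / 2) = -Real.tan (x 1 / 2) := by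
    rw [neg_div, Real.tan_neg]
  simp only [T, Fin.sum_univ_four, Fin.sum_univ_three, eps00, eps01, eps02, eps10, eps11,
    eps12, eps20, eps21, eps22, eps30, eps31, eps32]
  norm_num [hneg0, hneg1, Fin.ext_iff]
  linear_combination (1/64) * R1 + (1/64) * R2 - (1/64) * R3 - (1/64) * R4
end

section
/- Let ε_1 = (1,1,1), ε_2 = (−1,1,−1), ε_3 = (1,−1,−1), ε_4 = (−1,−1,1) in {±1}³, and for i,j,k ∈ {1,2,3} define T_{ijk} : ℝ³ → ℝ by T_{ijk}(x) = Σ_{a=1}^{4} ε_a^{(i)} ε_a^{(j)} ε_a^{(k)} · (1/16) · tan( π/4 − (ε_a · x)/4 ) + (1/4)·tan(−x_i/2) if i = j = k (no tan(−x_i/2) term otherwise). Then for every x ∈ ℝ³ such that cos(π/4 − (ε_a·x)/4) ≠ 0 for a = 1,…,4 and cos(x_i/2) ≠ 0 for i = 1,2,3, one has T_{112}(x)·T_{133}(x) + T_{122}(x)·T_{233}(x) + T_{123}(x)·T_{333}(x) = T_{113}(x)·T_{123}(x) + T_{123}(x)·T_{223}(x) + T_{133}(x)·T_{233}(x). -/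
open Real

/-- Tangent addition identity: if `α + β = π/2 - θ` then
`tan θ (tan α + tan β) = 1 - tan α tan β`. -/
lemma klein_key (α β θ : ℝ) (hα : Real.cos α ≠ 0) (hβ : Real.cos β ≠ 0)
    (hθ : Real.cos θ ≠ 0) (h : α + β = Real.pi/2 - θ) :
    Real.tan θ * (Real.tan α + Real.tan β) = 1 - Real.tan α * Real.tan β := by
  have h1 : Real.sin α * Real.cos β + Real.cos α * Real.sin β = Real.cos θ := by
    rw [← Real.sin_add, h, Real.sin_pi_div_two_sub]
  have h2 : Real.cos α * Real.cos β - Real.sin α * Real.sin β = Real.sin θ := by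
    rw [← Real.cos_add, h, Real.cos_pi_div_two_sub]
  have e1 : Real.tan α + Real.tan β = Real.cos θ / (Real.cos α * Real.cos β) := by
    rw [Real.tan_eq_sin_div_cos, Real.tan_eq_sin_div_cos]
    field_simp
    linear_combination h1
  have e2 : 1 - Real.tan α * Real.tan β = Real.sin θ / (Real.cos α * Real.cos β) := by
    rw [Real.tan_eq_sin_div_cos, Real.tan_eq_sin_div_cos]
    field_simp
    linear_combination h2
  rw [e1, e2, Real.tan_eq_sin_div_cos]
  field_simp

theorem klein_four_WDVV_second (x : Fin 3 → ℝ)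
    (hcos : ∀ a : Fin 4, Real.cos (Real.pi / 4 - (∑ t : Fin 3, eps a t * x t) / 4) ≠ 0)
    (hcos' : ∀ i : Fin 3, Real.cos (x i / 2) ≠ 0) :
    T 0 0 1 x * T 0 2 2 x + T 0 1 1 x * T 1 2 2 x + T 0 1 2 x * T 2 2 2 x
      = T 0 0 2 x * T 0 1 2 x + T 0 1 2 x * T 1 1 2 x + T 0 2 2 x * T 1 2 2 x := by
  -- the four angles
  set A : Fin 4 → ℝ := fun a => Real.pi / 4 - (∑ t : Fin 3, eps a t * x t) / 4 with hA
  have hAval : ∀ a : Fin 4, A a = Real.pi / 4 - (∑ t : Fin 3, eps a t * x t) / 4 :=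
    fun a => rfl
  have hA0 : A 0 = Real.pi/4 - (x 0 + x 1 + x 2)/4 := by
    rw [hAval]; simp [eps, Fin.sum_univ_three]
  have hA1 : A 1 = Real.pi/4 - (-(x 0) + x 1 - x 2)/4 := by
    rw [hAval]; simp [eps, Fin.sum_univ_three]; ring
  have hA2 : A 2 = Real.pi/4 - (x 0 - x 1 - x 2)/4 := by
    rw [hAval]; simp [eps, Fin.sum_univ_three]; ring
  have hA3 : A 3 = Real.pi/4 - (-(x 0) - x 1 + x 2)/4 := by
    rw [hAval]; simp [eps, Fin.sum_univ_three]; ring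
  set u1 := Real.tan (A 0) with hu1
  set u2 := Real.tan (A 1) with hu2
  set u3 := Real.tan (A 2) with hu3
  set u4 := Real.tan (A 3) with hu4
  set v := Real.tan (x 2 / 2) with hv
  -- the two tangent-addition relations
  have h14 : v * (u1 + u4) = 1 - u1 * u4 :=
    klein_key _ _ _ (hcos 0) (hcos 3) (hcos' 2)
      (by simp only [hA0, hA1, hA2, hA3, eps, Fin.sum_univ_three, Matrix.cons_val_zero,
        Matrix.cons_val_one, Matrix.head_cons, Matrix.cons_val_two, Matrix.tail_cons]; ring)
  have hcosneg : Real.cos (-(x 2 / 2)) ≠ 0 := by rw [Real.cos_neg]; exact hcos' 2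
  have h23 : v * (u2 + u3) = u2 * u3 - 1 := by
    have := klein_key _ _ _ (hcos 1) (hcos 2) hcosneg
      (by simp only [hA0, hA1, hA2, hA3, eps, Fin.sum_univ_three, Matrix.cons_val_zero,
        Matrix.cons_val_one, Matrix.head_cons, Matrix.cons_val_two, Matrix.tail_cons]; ring)
    rw [Real.tan_neg] at this
    rw [← hu2, ← hu3, ← hv] at this
    linarith [this]
  -- the tan(-x₂/2) term
  have hwv : Real.tan (-x 2 / 2) = -v := by rw [neg_div, Real.tan_neg]
  -- values of the T's
  have hT001 : T 0 0 1 x = (u1 + u2 - u3 - u4) / 16 := by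
    rw [hu1, hu2, hu3, hu4, hA0, hA1, hA2, hA3]
    show (∑ a : Fin 4, eps a 0 * eps a 0 * eps a 1 * (1/16) *
      Real.tan (Real.pi / 4 - (∑ t : Fin 3, eps a t * x t) / 4)) + _ = _
    rw [Fin.sum_univ_four]
    simp only [eps, Matrix.cons_val_zero, Matrix.cons_val_one, Matrix.head_cons,
      Matrix.cons_val_two, Matrix.tail_cons, Matrix.cons_val_three, Fin.sum_univ_three]
    norm_num [Fin.ext_iff]; ring_nf
  have hT122 : T 1 2 2 x = (u1 + u2 - u3 - u4) / 16 := by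
    rw [hu1, hu2, hu3, hu4, hA0, hA1, hA2, hA3]
    show (∑ a : Fin 4, eps a 1 * eps a 2 * eps a 2 * (1/16) *
      Real.tan (Real.pi / 4 - (∑ t : Fin 3, eps a t * x t) / 4)) + _ = _
    rw [Fin.sum_univ_four]
    simp only [eps, Matrix.cons_val_zero, Matrix.cons_val_one, Matrix.head_cons,
      Matrix.cons_val_two, Matrix.tail_cons, Matrix.cons_val_three, Fin.sum_univ_three]
    norm_num [Fin.ext_iff]; ring_nf
  have hT022 : T 0 2 2 x = (u1 - u2 + u3 - u4) / 16 := by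
    rw [hu1, hu2, hu3, hu4, hA0, hA1, hA2, hA3]
    show (∑ a : Fin 4, eps a 0 * eps a 2 * eps a 2 * (1/16) *
      Real.tan (Real.pi / 4 - (∑ t : Fin 3, eps a t * x t) / 4)) + _ = _
    rw [Fin.sum_univ_four]
    simp only [eps, Matrix.cons_val_zero, Matrix.cons_val_one, Matrix.head_cons,
      Matrix.cons_val_two, Matrix.tail_cons, Matrix.cons_val_three, Fin.sum_univ_three]
    norm_num [Fin.ext_iff]; ring_nf
  have hT011 : T 0 1 1 x = (u1 - u2 + u3 - u4) / 16 := by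
    rw [hu1, hu2, hu3, hu4, hA0, hA1, hA2, hA3]
    show (∑ a : Fin 4, eps a 0 * eps a 1 * eps a 1 * (1/16) *
      Real.tan (Real.pi / 4 - (∑ t : Fin 3, eps a t * x t) / 4)) + _ = _
    rw [Fin.sum_univ_four]
    simp only [eps, Matrix.cons_val_zero, Matrix.cons_val_one, Matrix.head_cons,
      Matrix.cons_val_two, Matrix.tail_cons, Matrix.cons_val_three, Fin.sum_univ_three]
    norm_num [Fin.ext_iff]; ring_nf
  have hT012 : T 0 1 2 x = (u1 + u2 + u3 + u4) / 16 := by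
    rw [hu1, hu2, hu3, hu4, hA0, hA1, hA2, hA3]
    show (∑ a : Fin 4, eps a 0 * eps a 1 * eps a 2 * (1/16) *
      Real.tan (Real.pi / 4 - (∑ t : Fin 3, eps a t * x t) / 4)) + _ = _
    rw [Fin.sum_univ_four]
    simp only [eps, Matrix.cons_val_zero, Matrix.cons_val_one, Matrix.head_cons,
      Matrix.cons_val_two, Matrix.tail_cons, Matrix.cons_val_three, Fin.sum_univ_three]
    norm_num [Fin.ext_iff]; ring_nf
  have hT002 : T 0 0 2 x = (u1 - u2 - u3 + u4) / 16 := by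
    rw [hu1, hu2, hu3, hu4, hA0, hA1, hA2, hA3]
    show (∑ a : Fin 4, eps a 0 * eps a 0 * eps a 2 * (1/16) *
      Real.tan (Real.pi / 4 - (∑ t : Fin 3, eps a t * x t) / 4)) + _ = _
    rw [Fin.sum_univ_four]
    simp only [eps, Matrix.cons_val_zero, Matrix.cons_val_one, Matrix.head_cons,
      Matrix.cons_val_two, Matrix.tail_cons, Matrix.cons_val_three, Fin.sum_univ_three]
    norm_num [Fin.ext_iff]; ring_nf
  have hT112 : T 1 1 2 x = (u1 - u2 - u3 + u4) / 16 := by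
    rw [hu1, hu2, hu3, hu4, hA0, hA1, hA2, hA3]
    show (∑ a : Fin 4, eps a 1 * eps a 1 * eps a 2 * (1/16) *
      Real.tan (Real.pi / 4 - (∑ t : Fin 3, eps a t * x t) / 4)) + _ = _
    rw [Fin.sum_univ_four]
    simp only [eps, Matrix.cons_val_zero, Matrix.cons_val_one, Matrix.head_cons,
      Matrix.cons_val_two, Matrix.tail_cons, Matrix.cons_val_three, Fin.sum_univ_three]
    norm_num [Fin.ext_iff]; ring_nf
  have hT222 : T 2 2 2 x = (u1 - u2 - u3 + u4) / 16 + Real.tan (-x 2 / 2) / 4 := by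
    rw [hu1, hu2, hu3, hu4, hA0, hA1, hA2, hA3]
    show (∑ a : Fin 4, eps a 2 * eps a 2 * eps a 2 * (1/16) *
      Real.tan (Real.pi / 4 - (∑ t : Fin 3, eps a t * x t) / 4)) + _ = _
    rw [Fin.sum_univ_four]
    simp only [eps, Matrix.cons_val_zero, Matrix.cons_val_one, Matrix.head_cons,
      Matrix.cons_val_two, Matrix.tail_cons, Matrix.cons_val_three, Fin.sum_univ_three]
    norm_num [Fin.ext_iff]; ring_nf
  rw [hT001, hT022, hT011, hT122, hT012, hT222, hT002, hT112, hwv]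
  linear_combination (-(1:ℝ)/64) * h14 + (-(1:ℝ)/64) * h23
end

section
/- Let A, A' : ℕ³ → ℚ both satisfy: (i) invariance under every permutation of the three arguments; (ii) A(n1,n2,n3) = 0 unless n1 ≡ n2 ≡ n3 (mod 2); (iii) A(m) = 0 whenever m1 + m2 + m3 < 3; (iv) A(1,1,1) = 1/4; and (v) conditions (W1) and (W2). If in addition A(n,0,0) = A'(n,0,0) for all n ∈ ℕ, then A = A'. -/
open Finset

/-- The standard basis vector `e_c` of `ℕ³`. -/
def e (c : Fin 3) : Fin 3 → ℕ := Pi.single c 1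

/-- Product of binomial coefficients `B(m,p) = C(m₁,p₁)·C(m₂,p₂)·C(m₃,p₃)`. -/
def B (m p : Fin 3 → ℕ) : ℕ := ∏ i : Fin 3, Nat.choose (m i) (p i)


lemma esum (a : Fin 3) : e a 0 + e a 1 + e a 2 = 1 := by fin_cases a <;> decide

lemma emadd (x : Fin 3 → ℕ) (a b c : Fin 3) : x + e a + e b + e c = x + (e a + e b + e c) := by
  funext i; simp [add_assoc]

lemma swap01 (f : (Fin 3 → ℕ) → ℚ)
    (hf : ∀ (σ : Equiv.Perm (Fin 3)) (x : Fin 3 → ℕ), f (x ∘ σ) = f x)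
    (a b c : ℕ) : f ![a,b,c] = f ![b,a,c] := by
  have h := hf (Equiv.swap 0 1) ![a,b,c]
  rw [show (![a,b,c] : Fin 3 → ℕ) ∘ (Equiv.swap 0 1) = ![b,a,c] from by
    funext i; fin_cases i <;> simp [Equiv.swap_apply_def]] at h
  exact h.symm

lemma swap12 (f : (Fin 3 → ℕ) → ℚ)
    (hf : ∀ (σ : Equiv.Perm (Fin 3)) (x : Fin 3 → ℕ), f (x ∘ σ) = f x)
    (a b c : ℕ) : f ![a,b,c] = f ![a,c,b] := by
  have h := hf (Equiv.swap 1 2) ![a,b,c]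
  rw [show (![a,b,c] : Fin 3 → ℕ) ∘ (Equiv.swap 1 2) = ![a,c,b] from by
    funext i; fin_cases i <;> simp [Equiv.swap_apply_def]] at h
  exact h.symm

lemma diff_boundary
    (A A' : (Fin 3 → ℕ) → ℚ) (n : ℕ)
    (IH : ∀ x : Fin 3 → ℕ, x 0 + x 1 + x 2 < n → A x = A' x)
    (u1 u2 v1 v2 w1 w2 x1 x2 : Fin 3)
    (m' : Fin 3 → ℕ) (hne : m' ≠ 0) (hdeg : m' 0 + m' 1 + m' 2 + 3 = n)
    (hS : (∑ p ∈ Finset.Icc 0 m', (B m' p : ℚ) * ∑ c : Fin 3,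
        (A (p + e u1 + e u2 + e c) * A (m' - p + e c + e v1 + e v2)
          - A (p + e w1 + e w2 + e c) * A (m' - p + e c + e x1 + e x2)))
      = ∑ p ∈ Finset.Icc 0 m', (B m' p : ℚ) * ∑ c : Fin 3,
        (A' (p + e u1 + e u2 + e c) * A' (m' - p + e c + e v1 + e v2)
          - A' (p + e w1 + e w2 + e c) * A' (m' - p + e c + e x1 + e x2))) :
    ((∑ c : Fin 3,
        (A (e u1 + e u2 + e c) * A (m' + e c + e v1 + e v2)
          - A (e w1 + e w2 + e c) * A (m' + e c + e x1 + e x2)))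
      - ∑ c : Fin 3,
        (A' (e u1 + e u2 + e c) * A' (m' + e c + e v1 + e v2)
          - A' (e w1 + e w2 + e c) * A' (m' + e c + e x1 + e x2)))
    + ((∑ c : Fin 3,
        (A (m' + e u1 + e u2 + e c) * A (e c + e v1 + e v2)
          - A (m' + e w1 + e w2 + e c) * A (e c + e x1 + e x2)))
      - ∑ c : Fin 3,
        (A' (m' + e u1 + e u2 + e c) * A' (e c + e v1 + e v2)
          - A' (m' + e w1 + e w2 + e c) * A' (e c + e x1 + e x2))) = 0 := by
  classical
  set F : (Fin 3 → ℕ) → ℚ := fun p => (B m' p : ℚ) *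
      ((∑ c : Fin 3,
        (A (p + e u1 + e u2 + e c) * A (m' - p + e c + e v1 + e v2)
          - A (p + e w1 + e w2 + e c) * A (m' - p + e c + e x1 + e x2)))
      - ∑ c : Fin 3,
        (A' (p + e u1 + e u2 + e c) * A' (m' - p + e c + e v1 + e v2)
          - A' (p + e w1 + e w2 + e c) * A' (m' - p + e c + e x1 + e x2))) with hF
  have key : ∑ p ∈ Finset.Icc 0 m', F p = 0 := by
    simp only [hF, mul_sub]
    rw [Finset.sum_sub_distrib, hS, sub_self]
  have hsub : ({0, m'} : Finset (Fin 3 → ℕ)) ⊆ Finset.Icc 0 m' := by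
    intro p hp
    simp only [Finset.mem_insert, Finset.mem_singleton] at hp
    rcases hp with rfl | rfl
    · exact Finset.mem_Icc.mpr ⟨le_rfl, fun i => Nat.zero_le _⟩
    · exact Finset.mem_Icc.mpr ⟨fun i => Nat.zero_le _, le_rfl⟩
  have hint : ∀ p ∈ Finset.Icc 0 m', p ∉ ({0, m'} : Finset (Fin 3 → ℕ)) → F p = 0 := by
    intro p hp hnp
    simp only [Finset.mem_insert, Finset.mem_singleton, not_or] at hnp
    obtain ⟨-, hle⟩ := Finset.mem_Icc.mp hp
    have hle0 : p 0 ≤ m' 0 := hle 0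
    have hle1 : p 1 ≤ m' 1 := hle 1
    have hle2 : p 2 ≤ m' 2 := hle 2
    have h1 : 1 ≤ p 0 + p 1 + p 2 := by
      by_contra h
      exact hnp.1 (funext fun i => by fin_cases i <;> simp <;> omega)
    have h2 : p 0 + p 1 + p 2 < m' 0 + m' 1 + m' 2 := by
      obtain ⟨i, hi⟩ := Function.ne_iff.mp hnp.2
      fin_cases i <;> simp at hi <;> omega
    have hAeq : ∀ (q : Fin 3 → ℕ) (a b c : Fin 3), q 0 + q 1 + q 2 + 3 < n →
        A (q + e a + e b + e c) = A' (q + e a + e b + e c) := by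
      intro q a b c hq
      apply IH
      have ha := esum a; have hb := esum b; have hc := esum c
      simp only [Pi.add_apply]
      omega
    have hqdeg : (m' - p) 0 + (m' - p) 1 + (m' - p) 2 + 3 < n := by
      simp only [Pi.sub_apply]; omega
    have hpdeg : p 0 + p 1 + p 2 + 3 < n := by omega
    rw [hF]
    simp only
    rw [Finset.sum_congr rfl (fun c _ => by
      rw [hAeq p u1 u2 c hpdeg, hAeq p w1 w2 c hpdeg,
        show m' - p + e c + e v1 + e v2 = (m' - p) + e c + e v1 + e v2 from rfl,
        hAeq (m' - p) c v1 v2 hqdeg, hAeq (m' - p) c x1 x2 hqdeg]), sub_self, mul_zero]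
  have h2 : ∑ p ∈ ({0, m'} : Finset (Fin 3 → ℕ)), F p = 0 :=
    (Finset.sum_subset hsub hint).trans key
  rw [Finset.sum_pair (Ne.symm hne), hF] at h2
  simp only [B, Pi.zero_apply, Nat.choose_zero_right, Nat.choose_self,
    Finset.prod_const_one, Nat.cast_one, one_mul, tsub_zero, tsub_self, zero_add] at h2
  exact h2

lemma L1lem (A A' : (Fin 3 → ℕ) → ℚ) (t3 : ℚ) (n : ℕ)
    (IH : ∀ x : Fin 3 → ℕ, x 0 + x 1 + x 2 < n → A x = A' x)
    (h111 : A ![1,1,1] = 1/4) (h111' : A' ![1,1,1] = 1/4)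
    (h300 : A ![3,0,0] = t3) (h300' : A' ![3,0,0] = t3)
    (h030 : A ![0,3,0] = t3) (h030' : A' ![0,3,0] = t3)
    (z210 : A ![2,1,0] = 0) (z210' : A' ![2,1,0] = 0)
    (z120 : A ![1,2,0] = 0) (z120' : A' ![1,2,0] = 0)
    (z201 : A ![2,0,1] = 0) (z201' : A' ![2,0,1] = 0)
    (z021 : A ![0,2,1] = 0) (z021' : A' ![0,2,1] = 0)
    (m' : Fin 3 → ℕ) (hne : m' ≠ 0) (hdeg : m' 0 + m' 1 + m' 2 + 3 = n)
    (hS : (∑ p ∈ Finset.Icc 0 m', (B m' p : ℚ) * ∑ c : Fin 3,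
        (A (p + e 0 + e 1 + e c) * A (m' - p + e c + e 0 + e 1)
          - A (p + e 0 + e 0 + e c) * A (m' - p + e c + e 1 + e 1)))
      = ∑ p ∈ Finset.Icc 0 m', (B m' p : ℚ) * ∑ c : Fin 3,
        (A' (p + e 0 + e 1 + e c) * A' (m' - p + e c + e 0 + e 1)
          - A' (p + e 0 + e 0 + e c) * A' (m' - p + e c + e 1 + e 1))) :
    A (m' + ![1,1,1]) - A' (m' + ![1,1,1])
      = 2 * t3 * ((A (m' + ![1,2,0]) - A' (m' + ![1,2,0]))
        + (A (m' + ![2,1,0]) - A' (m' + ![2,1,0]))) := by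
  have hb := diff_boundary A A' n IH 0 1 0 1 0 0 1 1 m' hne hdeg hS
  simp only [Fin.sum_univ_three, emadd] at hb
  rw [show e (0:Fin 3) + e 1 + e 0 = ![2,1,0] from by decide,
    show e (0:Fin 3) + e 1 + e 1 = ![1,2,0] from by decide,
    show e (0:Fin 3) + e 1 + e 2 = ![1,1,1] from by decide,
    show e (0:Fin 3) + e 0 + e 0 = ![3,0,0] from by decide,
    show e (0:Fin 3) + e 0 + e 1 = ![2,1,0] from by decide,
    show e (0:Fin 3) + e 0 + e 2 = ![2,0,1] from by decide,
    show e (1:Fin 3) + e 0 + e 1 = ![1,2,0] from by decide,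
    show e (2:Fin 3) + e 0 + e 1 = ![1,1,1] from by decide,
    show e (1:Fin 3) + e 1 + e 1 = ![0,3,0] from by decide,
    show e (2:Fin 3) + e 1 + e 1 = ![0,2,1] from by decide] at hb
  rw [h111, h111', h300, h300', h030, h030', z210, z210', z120, z120', z201, z201',
    z021, z021'] at hb
  linear_combination 2 * hb

lemma L2lem (A A' : (Fin 3 → ℕ) → ℚ) (t3 : ℚ) (n : ℕ)
    (IH : ∀ x : Fin 3 → ℕ, x 0 + x 1 + x 2 < n → A x = A' x)
    (h111 : A ![1,1,1] = 1/4) (h111' : A' ![1,1,1] = 1/4)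
    (h300 : A ![3,0,0] = t3) (h300' : A' ![3,0,0] = t3)
    (z210 : A ![2,1,0] = 0) (z210' : A' ![2,1,0] = 0)
    (z120 : A ![1,2,0] = 0) (z120' : A' ![1,2,0] = 0)
    (z201 : A ![2,0,1] = 0) (z201' : A' ![2,0,1] = 0)
    (z021 : A ![0,2,1] = 0) (z021' : A' ![0,2,1] = 0)
    (z102 : A ![1,0,2] = 0) (z102' : A' ![1,0,2] = 0)
    (z012 : A ![0,1,2] = 0) (z012' : A' ![0,1,2] = 0)
    (m' : Fin 3 → ℕ) (hne : m' ≠ 0) (hdeg : m' 0 + m' 1 + m' 2 + 3 = n)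
    (hS : (∑ p ∈ Finset.Icc 0 m', (B m' p : ℚ) * ∑ c : Fin 3,
        (A (p + e 0 + e 1 + e c) * A (m' - p + e c + e 0 + e 2)
          - A (p + e 0 + e 0 + e c) * A (m' - p + e c + e 1 + e 2)))
      = ∑ p ∈ Finset.Icc 0 m', (B m' p : ℚ) * ∑ c : Fin 3,
        (A' (p + e 0 + e 1 + e c) * A' (m' - p + e c + e 0 + e 2)
          - A' (p + e 0 + e 0 + e c) * A' (m' - p + e c + e 1 + e 2))) :
    (A (m' + ![1,0,2]) - A' (m' + ![1,0,2])) + (A (m' + ![1,2,0]) - A' (m' + ![1,2,0]))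
      - (A (m' + ![3,0,0]) - A' (m' + ![3,0,0]))
      = 4 * t3 * (A (m' + ![1,1,1]) - A' (m' + ![1,1,1])) := by
  have hb := diff_boundary A A' n IH 0 1 0 2 0 0 1 2 m' hne hdeg hS
  simp only [Fin.sum_univ_three, emadd] at hb
  rw [show e (0:Fin 3) + e 1 + e 0 = ![2,1,0] from by decide,
    show e (0:Fin 3) + e 1 + e 1 = ![1,2,0] from by decide,
    show e (0:Fin 3) + e 1 + e 2 = ![1,1,1] from by decide,
    show e (0:Fin 3) + e 0 + e 0 = ![3,0,0] from by decide,
    show e (0:Fin 3) + e 0 + e 1 = ![2,1,0] from by decide,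
    show e (0:Fin 3) + e 0 + e 2 = ![2,0,1] from by decide,
    show e (1:Fin 3) + e 0 + e 2 = ![1,1,1] from by decide,
    show e (2:Fin 3) + e 0 + e 2 = ![1,0,2] from by decide,
    show e (1:Fin 3) + e 1 + e 2 = ![0,2,1] from by decide,
    show e (2:Fin 3) + e 1 + e 2 = ![0,1,2] from by decide] at hb
  rw [h111, h111', h300, h300', z210, z210', z120, z120', z201, z201',
    z021, z021', z102, z102', z012, z012'] at hb
  linear_combination 4 * hb

/-- The `ℤ/2 × ℤ/2`-Hurwitz–Hodge integrals are uniquely determined by the WDVV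
equations, the length-three integrals, and the integrals `⟨ζ₁ⁿ⟩`. -/
theorem klein_four_integrals_unique
    (A A' : (Fin 3 → ℕ) → ℚ)
    -- (i) symmetry under permutations of the three arguments
    (hsymm : ∀ (σ : Equiv.Perm (Fin 3)) (m : Fin 3 → ℕ), A (m ∘ σ) = A m)
    (hsymm' : ∀ (σ : Equiv.Perm (Fin 3)) (m : Fin 3 → ℕ), A' (m ∘ σ) = A' m)
    -- (ii) monodromy condition: vanishing unless all parities agree
    (hpar : ∀ m : Fin 3 → ℕ, ¬(m 0 % 2 = m 1 % 2 ∧ m 1 % 2 = m 2 % 2) → A m = 0)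
    (hpar' : ∀ m : Fin 3 → ℕ, ¬(m 0 % 2 = m 1 % 2 ∧ m 1 % 2 = m 2 % 2) → A' m = 0)
    -- (iii) unstable vanishing
    (huns : ∀ m : Fin 3 → ℕ, m 0 + m 1 + m 2 < 3 → A m = 0)
    (huns' : ∀ m : Fin 3 → ℕ, m 0 + m 1 + m 2 < 3 → A' m = 0)
    -- (iv) the length-three integral ⟨ζ₁ζ₂ζ₃⟩ = 1/4
    (h111 : A ![1, 1, 1] = 1/4) (h111' : A' ![1, 1, 1] = 1/4)
    -- (v) WDVV equation (W1)
    (hW1 : ∀ m : Fin 3 → ℕ,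
      ∑ p ∈ Finset.Icc 0 m, (B m p : ℚ) *
        ∑ c : Fin 3,
          (A (p + e 0 + e 1 + e c) * A (m - p + e c + e 0 + e 1)
            - A (p + e 0 + e 0 + e c) * A (m - p + e c + e 1 + e 1))
      = if m = 0 then 1/16 else 0)
    (hW1' : ∀ m : Fin 3 → ℕ,
      ∑ p ∈ Finset.Icc 0 m, (B m p : ℚ) *
        ∑ c : Fin 3,
          (A' (p + e 0 + e 1 + e c) * A' (m - p + e c + e 0 + e 1)
            - A' (p + e 0 + e 0 + e c) * A' (m - p + e c + e 1 + e 1))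
      = if m = 0 then 1/16 else 0)
    -- (v) WDVV equation (W2)
    (hW2 : ∀ m : Fin 3 → ℕ,
      ∑ p ∈ Finset.Icc 0 m, (B m p : ℚ) *
        ∑ c : Fin 3,
          (A (p + e 0 + e 1 + e c) * A (m - p + e c + e 0 + e 2)
            - A (p + e 0 + e 0 + e c) * A (m - p + e c + e 1 + e 2)) = 0)
    (hW2' : ∀ m : Fin 3 → ℕ,
      ∑ p ∈ Finset.Icc 0 m, (B m p : ℚ) *
        ∑ c : Fin 3,
          (A' (p + e 0 + e 1 + e c) * A' (m - p + e c + e 0 + e 2)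
            - A' (p + e 0 + e 0 + e c) * A' (m - p + e c + e 1 + e 2)) = 0)
    -- agreement of the one-variable specializations ⟨ζ₁ⁿ⟩
    (hspec : ∀ n : ℕ, A ![n, 0, 0] = A' ![n, 0, 0]) :
    A = A' := by
  have z210 : A ![2,1,0] = 0 := hpar _ (by decide)
  have z210' : A' ![2,1,0] = 0 := hpar' _ (by decide)
  have z120 : A ![1,2,0] = 0 := hpar _ (by decide)
  have z120' : A' ![1,2,0] = 0 := hpar' _ (by decide)
  have z201 : A ![2,0,1] = 0 := hpar _ (by decide)
  have z201' : A' ![2,0,1] = 0 := hpar' _ (by decide)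
  have z021 : A ![0,2,1] = 0 := hpar _ (by decide)
  have z021' : A' ![0,2,1] = 0 := hpar' _ (by decide)
  have z102 : A ![1,0,2] = 0 := hpar _ (by decide)
  have z102' : A' ![1,0,2] = 0 := hpar' _ (by decide)
  have z012 : A ![0,1,2] = 0 := hpar _ (by decide)
  have z012' : A' ![0,1,2] = 0 := hpar' _ (by decide)
  have h030 : A ![0,3,0] = A ![3,0,0] := swap01 A hsymm 0 3 0
  have h030' : A' ![0,3,0] = A ![3,0,0] := (swap01 A' hsymm' 0 3 0).trans (hspec 3).symm
  funext m0
  suffices H : ∀ n : ℕ, ∀ m : Fin 3 → ℕ, m 0 + m 1 + m 2 = n → A m = A' m from H _ m0 rfl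
  intro n
  induction n using Nat.strong_induction_on with
  | _ n IH =>
  have IH' : ∀ x : Fin 3 → ℕ, x 0 + x 1 + x 2 < n → A x = A' x := fun x hx => IH _ hx x rfl
  have L1i : ∀ m' : Fin 3 → ℕ, m' ≠ 0 → m' 0 + m' 1 + m' 2 + 3 = n →
      A (m' + ![1,1,1]) - A' (m' + ![1,1,1])
        = 2 * A ![3,0,0] * ((A (m' + ![1,2,0]) - A' (m' + ![1,2,0]))
          + (A (m' + ![2,1,0]) - A' (m' + ![2,1,0]))) :=
    fun m' h1 h2 => L1lem A A' (A ![3,0,0]) n IH' h111 h111' rfl (hspec 3).symm h030 h030'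
      z210 z210' z120 z120' z201 z201' z021 z021' m' h1 h2 ((hW1 m').trans (hW1' m').symm)
  have L2i : ∀ m' : Fin 3 → ℕ, m' ≠ 0 → m' 0 + m' 1 + m' 2 + 3 = n →
      (A (m' + ![1,0,2]) - A' (m' + ![1,0,2])) + (A (m' + ![1,2,0]) - A' (m' + ![1,2,0]))
        - (A (m' + ![3,0,0]) - A' (m' + ![3,0,0]))
        = 4 * A ![3,0,0] * (A (m' + ![1,1,1]) - A' (m' + ![1,1,1])) :=
    fun m' h1 h2 => L2lem A A' (A ![3,0,0]) n IH' h111 h111' rfl (hspec 3).symm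
      z210 z210' z120 z120' z201 z201' z021 z021' z102 z102' z012 z012'
      m' h1 h2 ((hW2 m').trans (hW2' m').symm)
  have evenpos : ∀ x : Fin 3 → ℕ, (∀ i, x i % 2 = 0) → (∀ i, 1 ≤ x i) →
      x 0 + x 1 + x 2 = n → A x = A' x := by
    intro x hx hp hdeg
    have h20 : 2 ≤ x 0 := by have := hx 0; have := hp 0; omega
    have h21 : 2 ≤ x 1 := by have := hx 1; have := hp 1; omega
    have h22 : 2 ≤ x 2 := by have := hx 2; have := hp 2; omega
    have hx0 := hx 0; have hx1 := hx 1; have hx2 := hx 2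
    have hxe : x = (fun i => x i - 1) + ![1,1,1] := by
      funext i; fin_cases i <;> simp <;> omega
    have key := L1i (fun i => x i - 1)
      (by intro hc; have c0 := congrFun hc 0; simp at c0; omega)
      (by omega)
    have hz1 : A ((fun i => x i - 1) + ![1,2,0]) = 0 := hpar _ (by simp; omega)
    have hz1' : A' ((fun i => x i - 1) + ![1,2,0]) = 0 := hpar' _ (by simp; omega)
    have hz2 : A ((fun i => x i - 1) + ![2,1,0]) = 0 := hpar _ (by simp; omega)
    have hz2' : A' ((fun i => x i - 1) + ![2,1,0]) = 0 := hpar' _ (by simp; omega)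
    rw [hz1, hz1', hz2, hz2'] at key
    rw [hxe]
    linear_combination key
  have key0 : ∀ b a : ℕ, a % 2 = 0 → b % 2 = 0 → a + b = n → A ![a,b,0] = A' ![a,b,0] := by
    intro b
    induction b using Nat.strong_induction_on with
    | _ b IHb =>
    intro a ha hb hab
    rcases Nat.eq_zero_or_pos b with rfl | hbpos
    · exact hspec a
    have hb2 : 2 ≤ b := by omega
    rcases Nat.eq_zero_or_pos a with rfl | hapos
    · calc A ![0,b,0] = A ![b,0,0] := swap01 A hsymm 0 b 0
        _ = A' ![b,0,0] := hspec b
        _ = A' ![0,b,0] := (swap01 A' hsymm' 0 b 0).symm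
    have ha2 : 2 ≤ a := by omega
    have key := L2i ![a-1,b-2,0]
      (by intro hc; have c0 := congrFun hc 0; simp at c0; omega)
      (by simp; omega)
    rw [show (![a-1,b-2,0] : Fin 3 → ℕ) + ![1,1,1] = ![a,b-1,1] from by
          funext i; fin_cases i <;> simp <;> omega,
        show (![a-1,b-2,0] : Fin 3 → ℕ) + ![1,2,0] = ![a,b,0] from by
          funext i; fin_cases i <;> simp <;> omega,
        show (![a-1,b-2,0] : Fin 3 → ℕ) + ![1,0,2] = ![a,b-2,2] from by
          funext i; fin_cases i <;> simp <;> omega,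
        show (![a-1,b-2,0] : Fin 3 → ℕ) + ![3,0,0] = ![a+2,b-2,0] from by
          funext i; fin_cases i <;> simp <;> omega] at key
    have hmix : A ![a,b-1,1] = 0 := hpar _ (by simp; omega)
    have hmix' : A' ![a,b-1,1] = 0 := hpar' _ (by simp; omega)
    rcases Nat.lt_or_ge b 4 with h4 | h4
    · -- b = 2
      have hbb : b = 2 := by omega
      subst hbb
      norm_num at key hmix hmix'
      have hsw : A ![a,0,2] = A ![a,2,0] := swap12 A hsymm a 0 2
      have hsw2 : A' ![a,0,2] = A' ![a,2,0] := swap12 A' hsymm' a 0 2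
      have hs2 := hspec (a+2)
      linear_combination (1/2)*key - (1/2)*hsw + (1/2)*hsw2 + (1/2)*hs2
        + 2*(A ![3,0,0])*hmix - 2*(A ![3,0,0])*hmix'
    · -- b ≥ 4
      have hQ : A ![a+2,b-2,0] = A' ![a+2,b-2,0] :=
        IHb (b-2) (by omega) (a+2) (by omega) (by omega) (by omega)
      have hR : A ![a,b-2,2] = A' ![a,b-2,2] := evenpos ![a,b-2,2]
        (by intro i
            match i with
            | 0 => simpa using ha
            | 1 => simp; omega
            | 2 => simp)
        (by intro i
            match i with
            | 0 => simp; omega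
            | 1 => simp; omega
            | 2 => simp)
        (by simp; omega)
      linear_combination key + hQ - hR + 4*(A ![3,0,0])*hmix - 4*(A ![3,0,0])*hmix'
  intro m hm
  by_cases hlow : m 0 + m 1 + m 2 < 3
  · rw [huns m hlow, huns' m hlow]
  by_cases hparm : m 0 % 2 = m 1 % 2 ∧ m 1 % 2 = m 2 % 2
  · by_cases hodd : m 0 % 2 = 1
    · -- all entries odd
      have ho1 : m 1 % 2 = 1 := by omega
      have ho2 : m 2 % 2 = 1 := by omega
      by_cases h3 : m 0 + m 1 + m 2 = 3
      · have hmv : m = ![1,1,1] := by funext i; fin_cases i <;> simp <;> omega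
        rw [hmv, h111, h111']
      · have hme : m = (fun i => m i - 1) + ![1,1,1] := by
          funext i; fin_cases i <;> simp <;> omega
        have key := L1i (fun i => m i - 1)
          (by intro hc
              have c0 := congrFun hc 0; have c1 := congrFun hc 1; have c2 := congrFun hc 2
              simp at c0 c1 c2; omega)
          (by omega)
        have hz1 : A ((fun i => m i - 1) + ![1,2,0]) = 0 := hpar _ (by simp; omega)
        have hz1' : A' ((fun i => m i - 1) + ![1,2,0]) = 0 := hpar' _ (by simp; omega)
        have hz2 : A ((fun i => m i - 1) + ![2,1,0]) = 0 := hpar _ (by simp; omega)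
        have hz2' : A' ((fun i => m i - 1) + ![2,1,0]) = 0 := hpar' _ (by simp; omega)
        rw [hz1, hz1', hz2, hz2'] at key
        rw [hme]
        linear_combination key
    · -- all entries even
      have he0 : m 0 % 2 = 0 := by omega
      have he1 : m 1 % 2 = 0 := by omega
      have he2 : m 2 % 2 = 0 := by omega
      have hm3 : m = ![m 0, m 1, m 2] := by funext i; fin_cases i <;> rfl
      by_cases hz0 : m 0 = 0
      · rw [hm3, hz0]
        calc A ![0, m 1, m 2] = A ![m 1, m 2, 0] := by
              rw [swap01 A hsymm 0 (m 1) (m 2), swap12 A hsymm (m 1) 0 (m 2)]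
          _ = A' ![m 1, m 2, 0] := key0 (m 2) (m 1) he1 he2 (by omega)
          _ = A' ![0, m 1, m 2] := by
              rw [swap01 A' hsymm' 0 (m 1) (m 2), swap12 A' hsymm' (m 1) 0 (m 2)]
      · by_cases hz1 : m 1 = 0
        · rw [hm3, hz1]
          calc A ![m 0, 0, m 2] = A ![m 0, m 2, 0] := swap12 A hsymm (m 0) 0 (m 2)
            _ = A' ![m 0, m 2, 0] := key0 (m 2) (m 0) he0 he2 (by omega)
            _ = A' ![m 0, 0, m 2] := (swap12 A' hsymm' (m 0) 0 (m 2)).symm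
        · by_cases hz2 : m 2 = 0
          · rw [hm3, hz2]
            exact key0 (m 1) (m 0) he0 he1 (by omega)
          · exact evenpos m
              (by intro i
                  match i with
                  | 0 => exact he0
                  | 1 => exact he1
                  | 2 => exact he2)
              (by intro i
                  match i with
                  | 0 => omega
                  | 1 => omega
                  | 2 => omega) hm
  · rw [hpar m hparm, hpar' m hparm]
end
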